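/- Let ρ : [0,∞) → [0,1] be continuous and nondecreasing with ρ(0) > 0, and let α : [0,∞) → [0,∞) be 1-periodic and integrable with α* = ∫_0^1 α(s) ds > 0. Assume ρ(t₂) - ρ(t₁) ≥ ∫_{t₁}^{t₂} α(s) (min(ρ(s), 1-ρ(s)))^{(N-1)/N} ds for all 0 ≤ t₁ ≤ t₂. Then there exists T ≤ 1 + N/(2^{1/N} α*) such that ρ(t) ≥ 1/2 for all t ≥ T. -/

import Mathlib

open MeasureTheory Set

private lemma pow_sub_pow_le_aux {a b : ℝ} (n : ℕ) (ha : 0 ≤ a) (hab : a ≤ b) :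
    b ^ n - a ^ n ≤ n * b ^ (n - 1) * (b - a) := by
  have hb : 0 ≤ b := ha.trans hab
  rw [← geom_sum₂_mul b a n]
  have hsum : (∑ i ∈ Finset.range n, b ^ i * a ^ (n - 1 - i)) ≤ n * b ^ (n - 1) := by
    calc (∑ i ∈ Finset.range n, b ^ i * a ^ (n - 1 - i))
        ≤ ∑ _i ∈ Finset.range n, b ^ (n - 1) := by
          apply Finset.sum_le_sum
          intro i hi
          have hin : i ≤ n - 1 := Nat.le_sub_one_of_lt (Finset.mem_range.mp hi)
          calc b ^ i * a ^ (n - 1 - i) ≤ b ^ i * b ^ (n - 1 - i) :=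
                mul_le_mul_of_nonneg_left (pow_le_pow_left₀ ha hab _) (pow_nonneg hb i)
            _ = b ^ (i + (n - 1 - i)) := (pow_add b i _).symm
            _ = b ^ (n - 1) := by rw [Nat.add_sub_cancel' hin]
      _ = n * b ^ (n - 1) := by
          rw [Finset.sum_const, Finset.card_range, nsmul_eq_mul]
  have hba : 0 ≤ b - a := sub_nonneg.mpr hab
  exact mul_le_mul_of_nonneg_right hsum hba

private lemma key_step (N : ℕ) (hN : 1 ≤ N) {ε x y J : ℝ} (hε : 0 < ε) (hx : 0 < x)
    (hxy : x ≤ y) (hyx : y ≤ (1 + ε) * x) (hJ : 0 ≤ J)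
    (hgrow : x ^ (((N : ℝ) - 1) / N) * J ≤ y - x) :
    J / ((1 + ε) * N) ≤ y ^ ((1 : ℝ) / N) - x ^ ((1 : ℝ) / N) := by
  have hNR : (0 : ℝ) < N := by exact_mod_cast hN
  set a := x ^ ((1 : ℝ) / N) with ha_def
  set b := y ^ ((1 : ℝ) / N) with hb_def
  have hy : 0 < y := hx.trans_le hxy
  have ha : 0 < a := Real.rpow_pos_of_pos hx _
  have hb : 0 < b := Real.rpow_pos_of_pos hy _
  have hab : a ≤ b := Real.rpow_le_rpow hx.le hxy (by positivity)
  have haN : a ^ N = x := by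
    rw [ha_def, ← Real.rpow_natCast (x ^ ((1 : ℝ) / N)) N, ← Real.rpow_mul hx.le,
      one_div, inv_mul_cancel₀ (ne_of_gt hNR), Real.rpow_one]
  have hbN : b ^ N = y := by
    rw [hb_def, ← Real.rpow_natCast (y ^ ((1 : ℝ) / N)) N, ← Real.rpow_mul hy.le,
      one_div, inv_mul_cancel₀ (ne_of_gt hNR), Real.rpow_one]
  have hcast : ((N - 1 : ℕ) : ℝ) = (N : ℝ) - 1 := by
    push_cast [Nat.cast_sub hN]; ring
  have haN1 : a ^ (N - 1) = x ^ (((N : ℝ) - 1) / N) := by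
    rw [ha_def, ← Real.rpow_natCast (x ^ ((1 : ℝ) / N)) (N - 1), ← Real.rpow_mul hx.le, hcast]
    congr 1
    field_simp
  have hban : b ^ (N - 1) ≤ (1 + ε) * a ^ (N - 1) := by
    have h1 : b ≤ (1 + ε) ^ ((1 : ℝ) / N) * a := by
      rw [hb_def, ha_def, ← Real.mul_rpow (by positivity) hx.le]
      exact Real.rpow_le_rpow hy.le hyx (by positivity)
    have h2 : b ^ (N - 1) ≤ ((1 + ε) ^ ((1 : ℝ) / N)) ^ (N - 1) * a ^ (N - 1) := by
      rw [← mul_pow]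
      exact pow_le_pow_left₀ hb.le h1 _
    have h3 : ((1 + ε) ^ ((1 : ℝ) / N)) ^ (N - 1) ≤ 1 + ε := by
      rw [← Real.rpow_natCast ((1 + ε) ^ ((1 : ℝ) / N)) (N - 1), ← Real.rpow_mul (by positivity),
        hcast]
      calc (1 + ε) ^ (1 / (N : ℝ) * ((N : ℝ) - 1))
          ≤ (1 + ε) ^ (1 : ℝ) := by
            apply Real.rpow_le_rpow_of_exponent_le (by linarith)
            rw [div_mul_eq_mul_div, one_mul, div_le_one hNR]
            linarith
        _ = 1 + ε := Real.rpow_one _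
    calc b ^ (N - 1) ≤ ((1 + ε) ^ ((1 : ℝ) / N)) ^ (N - 1) * a ^ (N - 1) := h2
      _ ≤ (1 + ε) * a ^ (N - 1) := mul_le_mul_of_nonneg_right h3 (pow_nonneg ha.le _)
  have hmain : b ^ N - a ^ N ≤ N * b ^ (N - 1) * (b - a) := pow_sub_pow_le_aux N ha.le hab
  have h4 : a ^ (N - 1) * J ≤ b ^ N - a ^ N := by
    rw [haN, hbN, haN1]; exact hgrow
  have hba0 : 0 ≤ b - a := sub_nonneg.mpr hab
  have h5 : a ^ (N - 1) * J ≤ a ^ (N - 1) * ((N : ℝ) * (1 + ε) * (b - a)) := by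
    have h6 : (N : ℝ) * b ^ (N - 1) * (b - a) ≤ a ^ (N - 1) * ((N : ℝ) * (1 + ε) * (b - a)) := by
      have := mul_le_mul_of_nonneg_right hban hba0
      nlinarith [hNR]
    linarith [h4.trans hmain]
  have hpos : (0 : ℝ) < a ^ (N - 1) := pow_pos ha _
  have h7 : J ≤ (N : ℝ) * (1 + ε) * (b - a) := le_of_mul_le_mul_left h5 hpos
  rw [div_le_iff₀ (by positivity)]
  nlinarith [h7]

theorem stmt1 (N : ℕ) (hN : 1 ≤ N) (ρ α : ℝ → ℝ)
    (hρc : Continuous ρ)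
    (hρmono : ∀ s t, 0 ≤ s → s ≤ t → ρ s ≤ ρ t)
    (hρ0 : 0 < ρ 0)
    (hρ : ∀ t, 0 ≤ t → ρ t ∈ Set.Icc (0:ℝ) 1)
    (hαper : ∀ s, α (s + 1) = α s) (hαpos : ∀ s, 0 ≤ α s)
    (hαint : MeasureTheory.IntegrableOn α (Set.Icc 0 1))
    (hαstar : 0 < ∫ s in (0:ℝ)..1, α s)
    (hineq : ∀ t₁ t₂, 0 ≤ t₁ → t₁ ≤ t₂ →
      ∫ s in t₁..t₂, α s * (min (ρ s) (1 - ρ s)) ^ (((N:ℝ) - 1)/N) ≤ ρ t₂ - ρ t₁) :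
    ∃ T, T ≤ 1 + N / (2 ^ ((1:ℝ)/N) * ∫ s in (0:ℝ)..1, α s) ∧
      ∀ t, T ≤ t → 1/2 ≤ ρ t := by
  have hNR : (0 : ℝ) < N := by exact_mod_cast hN
  set A := ∫ s in (0:ℝ)..1, α s with hA
  have hper : Function.Periodic α 1 := hαper
  have h01 : IntervalIntegrable α volume 0 1 :=
    (intervalIntegrable_iff_integrableOn_Icc_of_le zero_le_one).2 hαint
  -- α is interval-integrable on every interval
  have hshift : ∀ n : ℤ, IntervalIntegrable α volume (n : ℝ) ((n : ℝ) + 1) := by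
    intro n
    have h2 := h01.comp_add_right (-(n : ℝ))
    have heq : (fun x : ℝ => α (x + -(n : ℝ))) = α := by
      funext x
      have h3 := (hper.int_mul (-n)) x
      push_cast at h3
      simpa [mul_one] using h3
    rw [heq] at h2
    have e1 : (0 : ℝ) - -(n : ℝ) = (n : ℝ) := by ring
    have e2 : (1 : ℝ) - -(n : ℝ) = (n : ℝ) + 1 := by ring
    rwa [e1, e2] at h2
  have hIntM : ∀ m : ℕ, IntervalIntegrable α volume (-(m : ℝ)) (m : ℝ) := by
    intro m
    induction m with
    | zero => simpa using IntervalIntegrable.refl (f := α) (μ := volume) (a := (0:ℝ))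
    | succ k ih =>
      have h1 := hshift (k : ℤ)
      have h2 := hshift (-(k : ℤ) - 1)
      push_cast at h1 h2
      have e1 : -((k : ℝ) + 1) = -(k : ℝ) - 1 := by ring
      have e2 : -(k : ℝ) - 1 + 1 = -(k : ℝ) := by ring
      rw [e2] at h2
      have : IntervalIntegrable α volume (-(k : ℝ) - 1) ((k : ℝ) + 1) :=
        (h2.trans ih).trans h1
      push_cast
      rwa [e1]
  have hall : ∀ a b : ℝ, IntervalIntegrable α volume a b := by
    intro a b
    set m := ⌈max |a| |b|⌉₊ with hm
    have hma : |a| ≤ (m : ℝ) := le_trans (le_max_left _ _) (Nat.le_ceil _)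
    have hmb : |b| ≤ (m : ℝ) := le_trans (le_max_right _ _) (Nat.le_ceil _)
    have hmm : -(m : ℝ) ≤ (m : ℝ) := by
      have : (0:ℝ) ≤ (m:ℝ) := Nat.cast_nonneg m
      linarith
    apply (hIntM m).mono_set
    have ha' : a ∈ uIcc (-(m : ℝ)) (m : ℝ) := by
      rw [uIcc_of_le hmm]
      constructor
      · linarith [neg_abs_le a]
      · linarith [le_abs_self a]
    have hb' : b ∈ uIcc (-(m : ℝ)) (m : ℝ) := by
      rw [uIcc_of_le hmm]
      constructor
      · linarith [neg_abs_le b]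
      · linarith [le_abs_self b]
    exact uIcc_subset_uIcc ha' hb'
  set I : ℝ → ℝ := fun t => ∫ s in (0:ℝ)..t, α s with hI
  have hIcont : Continuous I := intervalIntegral.continuous_primitive hall 0
  set B := (2 : ℝ) ^ ((1:ℝ)/N) with hB
  have hB1 : 1 ≤ B := Real.one_le_rpow one_le_two (by positivity)
  have hBpos : 0 < B := lt_of_lt_of_le one_pos hB1
  refine ⟨1 + N / (B * A), le_refl _, ?_⟩
  set T := 1 + (N : ℝ) / (B * A) with hT
  have hT1 : 1 < T := by
    rw [hT]
    have : 0 < (N : ℝ) / (B * A) := by positivity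
    linarith
  have hT0 : (0 : ℝ) ≤ T := by linarith
  intro t ht
  have hρpos : ∀ s, 0 ≤ s → 0 < ρ s := fun s hs => lt_of_lt_of_le hρ0 (hρmono 0 s le_rfl hs)
  suffices hhalf : 1/2 ≤ ρ T by
    exact le_trans hhalf (hρmono T t hT0 ht)
  by_contra hcon
  push_neg at hcon
  have hmin : ∀ s, 0 ≤ s → s ≤ T → min (ρ s) (1 - ρ s) = ρ s := by
    intro s hs hsT
    have h1 : ρ s ≤ ρ T := hρmono s T hs hsT
    have h2 : ρ s < 1/2 := lt_of_le_of_lt h1 hcon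
    exact min_eq_left (by linarith)
  set ε := ρ 0 ^ ((1:ℝ)/N) with hε
  have hεpos : 0 < ε := Real.rpow_pos_of_pos hρ0 _
  set c := 1 / ((1 + ε) * N) with hc
  have hcpos : 0 < c := by positivity
  set p := ((N : ℝ) - 1) / N with hp
  have hp0 : 0 ≤ p := by
    apply div_nonneg _ hNR.le
    have : (1 : ℝ) ≤ N := by exact_mod_cast hN
    linarith
  set f : ℝ → ℝ := fun t => ρ t ^ ((1:ℝ)/N) with hf
  have hfc : Continuous f := by
    rw [continuous_iff_continuousAt]
    intro s
    exact (Real.continuousAt_rpow_const (ρ s) _ (Or.inr (by positivity))).comp hρc.continuousAt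
  set S := {u : ℝ | c * I u ≤ f u - f 0} with hS
  have hS0 : (0 : ℝ) ∈ S := by
    simp only [hS, mem_setOf_eq, hI]
    rw [intervalIntegral.integral_same]
    simp
  have hSclosed : IsClosed S :=
    isClosed_le (continuous_const.mul hIcont) (hfc.sub continuous_const)
  have hgt : ∀ u ∈ S ∩ Ico (0:ℝ) T, ∀ z ∈ Ioi u, (S ∩ Ioc u z).Nonempty := by
    rintro u ⟨huS, hu0, huT⟩ z hz
    have hρu : 0 < ρ u := hρpos u hu0
    have hlt : ρ u < (1 + ε) * ρ u := by nlinarith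
    have hopen : ∀ᶠ v in nhds u, ρ v < (1 + ε) * ρ u :=
      (hρc.tendsto u).eventually_lt_const hlt
    obtain ⟨δ, hδpos, hδ⟩ := Metric.eventually_nhds_iff.mp hopen
    set u' := min (u + δ/2) (min z T) with hu'
    have huu' : u < u' := by
      apply lt_min (by linarith) (lt_min hz huT)
    have hu'T : u' ≤ T := le_trans (min_le_right _ _) (min_le_right _ _)
    have hu'z : u' ≤ z := le_trans (min_le_right _ _) (min_le_left _ _)
    have hu'0 : 0 ≤ u' := le_trans hu0 huu'.le
    have hρu' : ρ u' < (1 + ε) * ρ u := by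
      apply hδ
      rw [Real.dist_eq, abs_of_nonneg (by linarith)]
      have : u' ≤ u + δ/2 := min_le_left _ _
      linarith
    refine ⟨u', ?_, huu', hu'z⟩
    -- show u' ∈ S
    set J := ∫ s in u..u', α s with hJ
    have hJ0 : 0 ≤ J :=
      intervalIntegral.integral_nonneg huu'.le (fun s _ => hαpos s)
    have hmineq := hineq u u' hu0 huu'.le
    have hcongr : ∫ s in u..u', α s * (min (ρ s) (1 - ρ s)) ^ p
        = ∫ s in u..u', α s * ρ s ^ p := by
      apply intervalIntegral.integral_congr
      intro s hs
      rw [uIcc_of_le huu'.le] at hs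
      show α s * (min (ρ s) (1 - ρ s)) ^ p = α s * ρ s ^ p
      rw [hmin s (le_trans hu0 hs.1) (le_trans hs.2 hu'T)]
    have hαu : IntervalIntegrable α volume u u' := hall u u'
    have hJle : (ρ u) ^ p * J ≤ ∫ s in u..u', α s * ρ s ^ p := by
      have h1 : IntervalIntegrable (fun s => α s * (ρ u) ^ p) volume u u' :=
        hαu.mul_const _
      have h2 : IntervalIntegrable (fun s => α s * ρ s ^ p) volume u u' := by
        apply hαu.mul_continuousOn
        intro s _
        exact ((Real.continuousAt_rpow_const (ρ s) _ (Or.inr hp0)).comp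
          hρc.continuousAt).continuousWithinAt
      have h3 : ∀ s ∈ Icc u u', α s * (ρ u) ^ p ≤ α s * ρ s ^ p := by
        intro s hs
        exact mul_le_mul_of_nonneg_left
          (Real.rpow_le_rpow hρu.le (hρmono u s hu0 hs.1) hp0) (hαpos s)
      calc (ρ u) ^ p * J = ∫ s in u..u', α s * (ρ u) ^ p := by
            rw [intervalIntegral.integral_mul_const]; ring
        _ ≤ _ := intervalIntegral.integral_mono_on huu'.le h1 h2 h3
    have hgrow : ρ u ^ p * J ≤ ρ u' - ρ u := by
      apply le_trans hJle
      rw [← hcongr]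
      exact hmineq
    have hkey := key_step N hN hεpos hρu (hρmono u u' hu0 huu'.le) hρu'.le hJ0 hgrow
    have hcJ : c * J ≤ f u' - f u := by
      have : c * J = J / ((1 + ε) * N) := by rw [hc]; field_simp
      rw [this]
      exact hkey
    show c * I u' ≤ f u' - f 0
    have hadd : I u + J = I u' :=
      intervalIntegral.integral_add_adjacent_intervals (hall 0 u) (hall u u')
    have huS' : c * I u ≤ f u - f 0 := huS
    calc c * I u' = c * I u + c * J := by rw [← hadd]; ring
      _ ≤ (f u - f 0) + (f u' - f u) := add_le_add huS' hcJ
      _ = f u' - f 0 := by ring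
  have hsub : Icc (0:ℝ) T ⊆ S :=
    IsClosed.Icc_subset_of_forall_exists_gt (hSclosed.inter isClosed_Icc) hS0 hgt
  have hTS : c * I T ≤ f T - f 0 := hsub ⟨hT0, le_refl T⟩
  -- lower bound on I T
  set n := ⌊T⌋₊ with hn
  have hnT : (n : ℝ) ≤ T := Nat.floor_le hT0
  have hTn : T - 1 ≤ (n : ℝ) := by
    have := Nat.lt_floor_add_one T
    linarith
  have hIn : I (n : ℝ) = n * A := by
    have h := hper.intervalIntegral_add_zsmul_eq (n : ℤ) 0 hall
    simp only [zero_add, zsmul_eq_mul, mul_one, Int.cast_natCast, smul_eq_mul] at h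
    exact h
  have hInT : (0:ℝ) ≤ ∫ s in (n : ℝ)..T, α s :=
    intervalIntegral.integral_nonneg hnT (fun s _ => hαpos s)
  have hIT : (T - 1) * A ≤ I T := by
    have hadd : I (n : ℝ) + (∫ s in (n : ℝ)..T, α s) = I T :=
      intervalIntegral.integral_add_adjacent_intervals (hall 0 n) (hall n T)
    have h1 : (T - 1) * A ≤ (n : ℝ) * A := mul_le_mul_of_nonneg_right hTn hαstar.le
    rw [← hadd, hIn]
    linarith
  have hAne : A ≠ 0 := ne_of_gt hαstar
  have hBne : B ≠ 0 := ne_of_gt hBpos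
  have hTA : (T - 1) * A = (N : ℝ) / B := by
    rw [hT]
    field_simp
    ring
  have hfinal : ε + c * ((N : ℝ) / B) ≤ f T := by
    have h1 : c * ((N : ℝ) / B) ≤ c * I T := by
      apply mul_le_mul_of_nonneg_left _ hcpos.le
      rw [← hTA]
      exact hIT
    have hf0 : f 0 = ε := rfl
    linarith [hTS]
  have hcNB : c * ((N : ℝ) / B) = 1 / ((1 + ε) * B) := by
    rw [hc]
    field_simp
  have hfT : f T < 1 / B := by
    have h1 : ρ T ^ ((1:ℝ)/N) < (1/2 : ℝ) ^ ((1:ℝ)/N) :=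
      Real.rpow_lt_rpow (hρ T hT0).1 hcon (by positivity)
    have h2 : ((1:ℝ)/2) ^ ((1:ℝ)/N) = 1 / B := by
      rw [hB, one_div (( 2:ℝ) ^ ((1:ℝ)/(N:ℝ))), ← Real.inv_rpow (by norm_num : (0:ℝ) ≤ 2)]
      norm_num
    rw [← h2]
    exact h1
  have hεB : (1:ℝ) ≤ (1 + ε) * B := by nlinarith
  have e1 : 1 / B - 1 / ((1 + ε) * B) = ε / ((1 + ε) * B) := by
    rw [div_sub_div _ _ hBne (by positivity), div_eq_div_iff (by positivity) (by positivity)]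
    ring
  have e2 : ε / ((1 + ε) * B) ≤ ε := div_le_self hεpos.le hεB
  rw [hcNB] at hfinal
  linarith
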